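/- Let A be an integral domain with field of fractions K, let S be a finite subset of A, and let X be a set of prime ideals of A such that the intersection (inside K) of the localizations A_𝔭 over all 𝔭 ∈ X equals A. Then S is n-universal in A if and only if for every 𝔭 ∈ X the set S is n-universal in the localization A_𝔭. -/

import Mathlib

/-- The localization `A_𝔭` of `A` at a prime ideal `𝔭`, viewed as a subset of the
fraction field `K`: the set of elements of the form `a / s` with `a ∈ A`, `s ∈ A`,
`s ∉ 𝔭`. -/
def locAt (A K : Type*) [CommRing A] [IsDomain A] [Field K] [Algebra A K]
    [IsFractionRing A K] (𝔭 : Ideal A) : Set K :=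
  {x : K | ∃ a s : A, s ∉ 𝔭 ∧ x = algebraMap A K a / algebraMap A K s}

/-- A finite subset `S` of a subring (given as a subset `R ⊆ K` closed under the
relevant operations) is `n`-universal in `R` if for every polynomial `P ∈ K[X]` of
degree at most `n`, `P` maps `R` into `R` if and only if `P` maps `S` into `R`. -/
def IsNUniversalIn {A K : Type*} [CommRing A] [IsDomain A] [Field K] [Algebra A K]
    [IsFractionRing A K] (R : Set K) (n : ℕ) (S : Finset A) : Prop :=
  ∀ P : Polynomial K, P.natDegree ≤ n →
    ((∀ x ∈ R, Polynomial.eval x P ∈ R) ↔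
      ∀ s ∈ S, Polynomial.eval (algebraMap A K s) P ∈ R)

/-- A finite subset `S` of an integral domain `A` with field of fractions `K` is
`n`-universal if for every polynomial `P ∈ K[X]` of degree at most `n`, `P` maps `A`
into `A` if and only if `P` maps `S` into `A`. -/
def IsNUniversal (A K : Type*) [CommRing A] [IsDomain A] [Field K] [Algebra A K]
    [IsFractionRing A K] (n : ℕ) (S : Finset A) : Prop :=
  ∀ P : Polynomial K, P.natDegree ≤ n →
    ((∀ a : A, ∃ b : A, Polynomial.eval (algebraMap A K a) P = algebraMap A K b) ↔
      ∀ s ∈ S, ∃ b : A, Polynomial.eval (algebraMap A K s) P = algebraMap A K b)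

section Aux

open Polynomial

variable {A K : Type*} [CommRing A] [IsDomain A] [Field K] [Algebra A K]
  [IsFractionRing A K] {𝔭 : Ideal A}

lemma locAt_map_ne_zero {s : A} (hs : s ∉ 𝔭) : algebraMap A K s ≠ 0 := by
  intro h
  apply hs
  have : s = 0 := by
    apply IsFractionRing.injective A K
    simpa using h
  rw [this]
  exact 𝔭.zero_mem

lemma mem_locAt_of_mem_range (h𝔭 : 𝔭.IsPrime) {x : K}
    (hx : x ∈ Set.range (algebraMap A K)) : x ∈ locAt A K 𝔭 := by
  obtain ⟨a, rfl⟩ := hx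
  exact ⟨a, 1, (Ideal.ne_top_iff_one 𝔭).mp h𝔭.ne_top, by simp⟩

lemma locAt_sub_mem (h𝔭 : 𝔭.IsPrime) {x y : K} (hx : x ∈ locAt A K 𝔭)
    (hy : y ∈ locAt A K 𝔭) : x - y ∈ locAt A K 𝔭 := by
  obtain ⟨a, s, hs, rfl⟩ := hx
  obtain ⟨b, t, ht, rfl⟩ := hy
  refine ⟨a * t - s * b, s * t, fun h => (h𝔭.mem_or_mem h).elim hs ht, ?_⟩
  rw [div_sub_div _ _ (locAt_map_ne_zero hs) (locAt_map_ne_zero ht),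
    map_sub, map_mul, map_mul, map_mul]

lemma locAt_div_mem (h𝔭 : 𝔭.IsPrime) {x : K} (hx : x ∈ locAt A K 𝔭) {s : A}
    (hs : s ∉ 𝔭) : x / algebraMap A K s ∈ locAt A K 𝔭 := by
  obtain ⟨a, t, ht, rfl⟩ := hx
  exact ⟨a, t * s, fun h => (h𝔭.mem_or_mem h).elim ht hs, by rw [map_mul, ← div_div]⟩

/-- Key lemma: a polynomial of degree at most `d` mapping `A` into `A` maps `A_𝔭`
into `A_𝔭`. Proved by induction on `d`, using `g(Y) = f(sY) - s^d f(Y)`. -/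
lemma locAt_key (h𝔭 : 𝔭.IsPrime) :
    ∀ d : ℕ, ∀ f : Polynomial K, f.natDegree ≤ d →
      (∀ a : A, f.eval (algebraMap A K a) ∈ Set.range (algebraMap A K)) →
      ∀ x ∈ locAt A K 𝔭, f.eval x ∈ locAt A K 𝔭 := by
  intro d
  induction d with
  | zero =>
    intro f hdeg hf x hx
    obtain ⟨c, rfl⟩ := natDegree_eq_zero.mp (le_antisymm hdeg (Nat.zero_le _))
    have h0 := hf 0
    rw [eval_C] at h0
    rw [eval_C]
    exact mem_locAt_of_mem_range h𝔭 h0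
  | succ d ih =>
    intro f hdeg hf x hx
    by_cases hd : f.natDegree ≤ d
    · exact ih f hd hf x hx
    have hdeg' : f.natDegree = d + 1 := le_antisymm hdeg (not_le.mp hd)
    obtain ⟨a, s, hs, rfl⟩ := hx
    have hσ : algebraMap A K s ≠ 0 := locAt_map_ne_zero hs
    set σ : K := algebraMap A K s with hσdef
    set g : Polynomial K := f.comp (C σ * X) - C (σ ^ (d + 1)) * f with hg
    have hq1 : (C σ * X).natDegree = 1 := natDegree_C_mul_X σ hσ
    -- degree bound for g
    have hgdeg : g.natDegree ≤ d := by
      rw [natDegree_le_iff_coeff_eq_zero]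
      intro N hN
      rw [hg, coeff_sub, coeff_C_mul]
      rcases eq_or_lt_of_le (Nat.succ_le_of_lt hN) with rfl | hNlt
      · have hcomp : (f.comp (C σ * X)).coeff (d + 1) = f.leadingCoeff * σ ^ (d + 1) := by
          have := coeff_comp_degree_mul_degree (p := f) (q := C σ * X) (by rw [hq1]; exact one_ne_zero)
          rw [hq1, mul_one, hdeg', leadingCoeff_C_mul_X] at this
          exact this
        show (f.comp (C σ * X)).coeff (d + 1) - σ ^ (d + 1) * f.coeff (d + 1) = 0
        rw [hcomp, ← hdeg', coeff_natDegree]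
        ring
      · have h1 : (f.comp (C σ * X)).natDegree < N := by
          calc (f.comp (C σ * X)).natDegree ≤ f.natDegree * (C σ * X).natDegree :=
                natDegree_comp_le
            _ = d + 1 := by rw [hq1, mul_one, hdeg']
            _ < N := hNlt
        have h2 : f.natDegree < N := by omega
        rw [coeff_eq_zero_of_natDegree_lt h1, coeff_eq_zero_of_natDegree_lt h2,
          mul_zero, sub_zero]
    -- g is integer-valued on A
    have hg_int : ∀ b : A, g.eval (algebraMap A K b) ∈ Set.range (algebraMap A K) := by
      intro b
      obtain ⟨c₁, hc₁⟩ := hf (s * b)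
      obtain ⟨c₂, hc₂⟩ := hf b
      refine ⟨c₁ - s ^ (d + 1) * c₂, ?_⟩
      rw [hg, eval_sub, eval_comp, eval_mul, eval_C, eval_X, hσdef, ← map_mul, eval_mul,
        eval_C]
      rw [← hc₁, ← hc₂, map_sub, map_mul, map_pow]
    -- evaluate g at x = a/s
    have hax : σ * (algebraMap A K a / σ) = algebraMap A K a := by
      rw [mul_comm, div_mul_cancel₀ _ hσ]
    have hgx : g.eval (algebraMap A K a / σ) =
        f.eval (algebraMap A K a) - σ ^ (d + 1) * f.eval (algebraMap A K a / σ) := by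
      rw [hg, eval_sub, eval_comp, eval_mul, eval_C, eval_X, hax, eval_mul, eval_C]
    have hmemg : g.eval (algebraMap A K a / σ) ∈ locAt A K 𝔭 :=
      ih g hgdeg hg_int _ ⟨a, s, hs, rfl⟩
    have hfa : f.eval (algebraMap A K a) ∈ locAt A K 𝔭 :=
      mem_locAt_of_mem_range h𝔭 (hf a)
    have hpow : s ^ (d + 1) ∉ 𝔭 := fun h => hs (h𝔭.mem_of_pow_mem _ h)
    have hfx : f.eval (algebraMap A K a / σ) =
        (f.eval (algebraMap A K a) - g.eval (algebraMap A K a / σ)) /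
          algebraMap A K (s ^ (d + 1)) := by
      rw [map_pow, ← hσdef, eq_div_iff (pow_ne_zero _ hσ), hgx]
      ring
    rw [hfx]
    exact locAt_div_mem h𝔭 (locAt_sub_mem h𝔭 hfa hmemg) hpow

end Aux

/-- Local-global principle: if `X` is a set of prime ideals of `A` such that the
intersection of the localizations `A_𝔭` over `𝔭 ∈ X` (inside the fraction field `K`)
equals `A`, then `S` is `n`-universal in `A` if and only if `S` is `n`-universal in
`A_𝔭` for all `𝔭 ∈ X`. -/
theorem stmt3 {A K : Type*} [CommRing A] [IsDomain A] [Field K] [Algebra A K]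
    [IsFractionRing A K] (n : ℕ) (S : Finset A) (X : Set (Ideal A))
    (hprime : ∀ 𝔭 ∈ X, 𝔭.IsPrime)
    (hX : (⋂ 𝔭 ∈ X, locAt A K 𝔭) = Set.range (algebraMap A K)) :
    IsNUniversal A K n S ↔ ∀ 𝔭 ∈ X, IsNUniversalIn (locAt A K 𝔭) n S := by
  classical
  constructor
  · -- universal in A implies universal in each A_𝔭
    intro H 𝔭 h𝔭X
    have h𝔭 := hprime 𝔭 h𝔭X
    intro P hP
    constructor
    · intro hAll s _
      exact hAll _ (mem_locAt_of_mem_range h𝔭 ⟨s, rfl⟩)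
    · intro hS x hx
      have hS' : ∀ s ∈ S, ∃ a t : A, t ∉ 𝔭 ∧
          P.eval (algebraMap A K s) = algebraMap A K a / algebraMap A K t := hS
      choose av tv htv hval using hS'
      set t : A := ∏ u ∈ S.attach, tv u.1 u.2 with htdef
      have ht : t ∉ 𝔭 := by
        intro h
        obtain ⟨u, _, hu⟩ := Ideal.IsPrime.prod_mem_iff.mp h
        exact htv u.1 u.2 hu
      set Q : Polynomial K := Polynomial.C (algebraMap A K t) * P with hQ
      have hQdeg : Q.natDegree ≤ n := le_trans (Polynomial.natDegree_C_mul_le _ _) hP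
      have hQS : ∀ s ∈ S, ∃ b : A,
          Q.eval (algebraMap A K s) = algebraMap A K b := by
        intro s hsS
        refine ⟨(∏ u ∈ S.attach.erase ⟨s, hsS⟩, tv u.1 u.2) * av s hsS, ?_⟩
        rw [hQ, Polynomial.eval_mul, Polynomial.eval_C, hval s hsS, htdef,
          ← Finset.mul_prod_erase S.attach _ (Finset.mem_attach S ⟨s, hsS⟩)]
        have hts0 : algebraMap A K (tv s hsS) ≠ 0 := locAt_map_ne_zero (htv s hsS)
        rw [map_mul, map_mul]
        field_simp
      have hQA : ∀ a : A, ∃ b : A, Q.eval (algebraMap A K a) = algebraMap A K b :=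
        (H Q hQdeg).mpr hQS
      have hQA' : ∀ a : A, Q.eval (algebraMap A K a) ∈ Set.range (algebraMap A K) := by
        intro a
        obtain ⟨b, hb⟩ := hQA a
        exact ⟨b, hb.symm⟩
      have hQloc : Q.eval x ∈ locAt A K 𝔭 := locAt_key h𝔭 n Q hQdeg hQA' x hx
      have ht0 : algebraMap A K t ≠ 0 := locAt_map_ne_zero ht
      have hPx : P.eval x = Q.eval x / algebraMap A K t := by
        rw [hQ, Polynomial.eval_mul, Polynomial.eval_C, mul_div_cancel_left₀ _ ht0]
      rw [hPx]
      exact locAt_div_mem h𝔭 hQloc ht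
  · -- universal in each A_𝔭 implies universal in A
    intro H P hP
    constructor
    · intro hA s _
      exact hA s
    · intro hS a
      have hmem : P.eval (algebraMap A K a) ∈ ⋂ 𝔭 ∈ X, locAt A K 𝔭 := by
        refine Set.mem_iInter₂.mpr fun 𝔭 h𝔭X => ?_
        have h𝔭 := hprime 𝔭 h𝔭X
        refine (H 𝔭 h𝔭X P hP).mpr ?_ _ (mem_locAt_of_mem_range h𝔭 ⟨a, rfl⟩)
        intro s hsS
        obtain ⟨b, hb⟩ := hS s hsS
        rw [hb]
        exact mem_locAt_of_mem_range h𝔭 ⟨b, rfl⟩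
      rw [hX] at hmem
      obtain ⟨b, hb⟩ := hmem
      exact ⟨b, hb.symm⟩
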